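/- Let F : ℝⁿ → ℝ be continuously differentiable and let the weight function be the constant function g(α) = 1. Then for every input x ∈ ℝⁿ and baseline x' ∈ ℝⁿ, the Path-Weighted Integrated Gradients attributions satisfy the Completeness property: the sum over all coordinates k of PWIG_k(F, x, x', g) equals F(x) − F(x'). -/

import Mathlib

open MeasureTheory intervalIntegral

/-- Path-Weighted Integrated Gradients attribution for the `k`-th coordinate. -/
noncomputable def pwig (n : ℕ) (F : (Fin n → ℝ) → ℝ) (x x' : Fin n → ℝ)
    (g : ℝ → ℝ) (k : Fin n) : ℝ :=
  (x k - x' k) * ∫ α in (0:ℝ)..1, g α * fderiv ℝ F (x' + α • (x - x')) (Pi.single k 1)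

theorem pwig_completeness (n : ℕ) (F : (Fin n → ℝ) → ℝ) (hF : ContDiff ℝ 1 F)
    (x x' : Fin n → ℝ) :
    ∑ k : Fin n, pwig n F x x' (fun _ => 1) k = F x - F x' := by
  set γ : ℝ → (Fin n → ℝ) := fun α => x' + α • (x - x') with hγ
  have hγd : ∀ α : ℝ, HasDerivAt γ (x - x') α := by
    intro α
    have := ((hasDerivAt_id α).smul_const (x - x')).const_add x'
    simpa [hγ] using this
  have hγc : Continuous γ := by
    continuity
  have hFd : Differentiable ℝ F := hF.differentiable one_ne_zero
  have hfc : Continuous (fun p => fderiv ℝ F p) := (hF.fderiv_right (m := 0) le_rfl).continuous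
  -- continuity of integrands
  have hcont : ∀ v : Fin n → ℝ, Continuous (fun α : ℝ => fderiv ℝ F (γ α) v) := by
    intro v
    exact (ContinuousLinearMap.apply ℝ ℝ v).continuous.comp (hfc.comp hγc)
  have hsum :
      ∑ k : Fin n, pwig n F x x' (fun _ => 1) k =
        ∫ α in (0:ℝ)..1, ∑ k : Fin n, (x k - x' k) * fderiv ℝ F (γ α) (Pi.single k 1) := by
    rw [intervalIntegral.integral_finset_sum]
    · refine Finset.sum_congr rfl fun k _ => ?_
      rw [pwig, ← intervalIntegral.integral_const_mul]
      simp [hγ]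
    · intro k _
      exact (Continuous.intervalIntegrable (by exact continuous_const.mul (hcont _)) 0 1)
  rw [hsum]
  have hkey : ∀ α : ℝ, ∑ k : Fin n, (x k - x' k) * fderiv ℝ F (γ α) (Pi.single k 1)
      = fderiv ℝ F (γ α) (x - x') := by
    intro α
    have hx : (x - x') = ∑ k : Fin n, (x k - x' k) • (Pi.single k (1:ℝ) : Fin n → ℝ) := by
      ext j
      simp [Finset.sum_apply, Pi.single_apply]
    rw [hx]
    rw [map_sum]
    refine Finset.sum_congr rfl fun k _ => ?_
    rw [(fderiv ℝ F (γ α)).map_smul]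
    simp [smul_eq_mul]
  simp_rw [hkey]
  have hFTC : ∫ α in (0:ℝ)..1, fderiv ℝ F (γ α) (x - x') = F (γ 1) - F (γ 0) := by
    refine intervalIntegral.integral_eq_sub_of_hasDerivAt (f := fun α => F (γ α)) (fun α _ => ?_) ?_
    · exact (hFd (γ α)).hasFDerivAt.comp_hasDerivAt α (hγd α)
    · exact ((hcont (x - x')).intervalIntegrable 0 1)
  rw [hFTC]
  simp [hγ]
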